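/- For c ∈ (0,1) and a multigraph K whose maximum degree is at most |V(K)|^c / 10, the number of partitions V₁ ⊔ ... ⊔ V_s = V(K) such that each part V_i induces a connected sub-multigraph is at most |V(K)|^{c·|V(K)|}. -/

import Mathlib

open SimpleGraph Function

private lemma exists_parent {V : Type*} [Fintype V] [DecidableEq V]
    (K : SimpleGraph V) (A : Finset V) (hA : (K.induce (A : Set V)).Connected) :
    ∃ (f : V → V) (r : V), r ∈ A ∧ (∀ v ∈ A, f v ∈ A) ∧
      (∀ v, f v = v ∨ K.Adj v (f v)) ∧
      (∀ v ∈ A, f^[Fintype.card V] v = r) := by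
  classical
  set S := (A : Set V)
  set G : SimpleGraph S := K.induce S with hG
  haveI : Nonempty S := hA.nonempty
  obtain ⟨r₀⟩ := hA.nonempty
  -- step
  have step : ∀ a : S, a ≠ r₀ → ∃ b : S, G.Adj a b ∧ G.dist b r₀ < G.dist a r₀ := by
    intro a ha
    have hpos : 0 < G.dist a r₀ := hA.pos_dist_of_ne ha
    obtain ⟨p, _, hlen⟩ := hA.exists_path_of_dist a r₀
    cases p with
    | nil => simp [SimpleGraph.dist_self] at hpos
    | cons h q =>
      refine ⟨_, h, ?_⟩
      have := SimpleGraph.dist_le q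
      simp [SimpleGraph.Walk.length_cons] at hlen
      omega
  set g : S → S := fun a => if h : a = r₀ then a else Classical.choose (step a h) with hgdef
  have hgr : g r₀ = r₀ := by simp [hgdef]
  have hgadj : ∀ a, g a = a ∨ G.Adj a (g a) := by
    intro a
    by_cases h : a = r₀
    · left; simp [hgdef, h]
    · right
      have := (Classical.choose_spec (step a h)).1
      simpa [hgdef, h] using this
  have hgdist : ∀ a, a ≠ r₀ → G.dist (g a) r₀ < G.dist a r₀ := by
    intro a h
    have := (Classical.choose_spec (step a h)).2
    simpa [hgdef, h] using this
  have key : ∀ d (a : S), G.dist a r₀ ≤ d → g^[d] a = r₀ := by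
    intro d
    induction d with
    | zero =>
      intro a hd
      simp only [Function.iterate_zero, id]
      by_contra hne
      have := hA.pos_dist_of_ne hne
      omega
    | succ d ih =>
      intro a hd
      by_cases h : a = r₀
      · subst h; exact Function.iterate_fixed hgr _
      · rw [Function.iterate_succ_apply]
        exact ih _ (by have := hgdist a h; omega)
  have hdistcard : ∀ a : S, G.dist a r₀ ≤ Fintype.card V := by
    intro a
    obtain ⟨p, hp, hlen⟩ := hA.exists_path_of_dist a r₀
    have h1 : p.length < Fintype.card S := hp.length_lt
    have h2 : Fintype.card S ≤ Fintype.card V :=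
      Fintype.card_le_of_injective _ Subtype.val_injective
    omega
  have hkey : ∀ a : S, g^[Fintype.card V] a = r₀ := fun a => key _ a (hdistcard a)
  -- lift
  set f : V → V := fun v => if h : v ∈ A then ↑(g ⟨v, by simpa [S] using h⟩) else v with hfdef
  have hfA : ∀ v ∈ A, f v ∈ A := by
    intro v hv
    simp only [hfdef, dif_pos hv]
    exact (g ⟨v, by simpa [S] using hv⟩).2
  have hfadj : ∀ v, f v = v ∨ K.Adj v (f v) := by
    intro v
    by_cases hv : v ∈ A
    · simp only [hfdef, dif_pos hv]
      rcases hgadj ⟨v, by simpa [S] using hv⟩ with h | h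
      · left; rw [h]
      · right; exact h
    · left; simp [hfdef, hv]
  have hiter : ∀ k, ∀ v : S, f^[k] ↑v = ↑(g^[k] v) := by
    intro k
    induction k with
    | zero => intro v; simp
    | succ k ih =>
      intro v
      rw [Function.iterate_succ_apply', Function.iterate_succ_apply', ih v]
      have hm : ((g^[k] v : S) : V) ∈ A := (g^[k] v).2
      simp only [hfdef, dif_pos hm]

  exact ⟨f, ↑r₀, r₀.2, hfA, hfadj, fun v hv => by
    have := hiter (Fintype.card V) ⟨v, by simpa [S] using hv⟩
    rw [this, hkey]⟩

private lemma exists_encode {V : Type*} [Fintype V] [DecidableEq V]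
    (K : SimpleGraph V) (P : Finset (Finset V))
    (h1 : ∀ A ∈ P, A.Nonempty ∧ (K.induce (A : Set V)).Connected)
    (h2 : ∀ A ∈ P, ∀ B ∈ P, A ≠ B → Disjoint A B)
    (h3 : P.sup id = Finset.univ) :
    ∃ F : V → V, (∀ v, F v = v ∨ K.Adj v (F v)) ∧
      (∀ A ∈ P, ∀ v ∈ A, F^[Fintype.card V] v ∈ A) ∧
      (∀ A ∈ P, ∀ v ∈ A, ∀ w ∈ A, F^[Fintype.card V] v = F^[Fintype.card V] w) := by
  classical
  -- choose parent functions per part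
  have hpart : ∀ A : {A // A ∈ P}, ∃ (f : V → V) (r : V), r ∈ A.1 ∧
      (∀ v ∈ A.1, f v ∈ A.1) ∧ (∀ v, f v = v ∨ K.Adj v (f v)) ∧
      (∀ v ∈ A.1, f^[Fintype.card V] v = r) :=
    fun A => exists_parent K A.1 (h1 A.1 A.2).2
  choose f r hrmem hfA hfadj hfit using hpart
  -- choose part of each vertex
  have hcov : ∀ v : V, ∃ A ∈ P, v ∈ A := by
    intro v
    have : v ∈ P.sup id := h3 ▸ Finset.mem_univ v
    simpa using Finset.mem_sup.mp this
  choose pt hptP hvpt using hcov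
  have huniq : ∀ A ∈ P, ∀ v ∈ A, pt v = A := by
    intro A hA v hv
    by_contra hne
    exact Finset.disjoint_left.mp (h2 _ (hptP v) _ hA hne) (hvpt v) hv
  set F : V → V := fun v => f ⟨pt v, hptP v⟩ v with hFdef
  have hagree : ∀ A : {A // A ∈ P}, ∀ v ∈ A.1, ∀ k, F^[k] v = (f A)^[k] v := by
    intro A v hv k
    induction k generalizing v hv with
    | zero => simp
    | succ k ih =>
      rw [Function.iterate_succ_apply, Function.iterate_succ_apply]
      have hFv : F v = f A v := by
        have h := huniq A.1 A.2 v hv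
        simp only [hFdef]
        congr 1
        exact Subtype.ext h
      rw [hFv]
      exact ih _ (hfA A v hv)
  refine ⟨F, ?_, ?_, ?_⟩
  · intro v; exact hfadj ⟨pt v, hptP v⟩ v
  · intro A hA v hv
    rw [hagree ⟨A, hA⟩ v hv, hfit ⟨A, hA⟩ v hv]
    exact hrmem ⟨A, hA⟩
  · intro A hA v hv w hw
    rw [hagree ⟨A, hA⟩ v hv, hagree ⟨A, hA⟩ w hw, hfit ⟨A, hA⟩ v hv, hfit ⟨A, hA⟩ w hw]

private lemma encode_mem {V : Type*} [Fintype V] [DecidableEq V]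
    (K : SimpleGraph V) (P Q : Finset (Finset V)) (F : V → V)
    (hP1 : ∀ A ∈ P, A.Nonempty) (hP2 : ∀ A ∈ P, ∀ B ∈ P, A ≠ B → Disjoint A B)
    (hP3 : P.sup id = Finset.univ)
    (hQ2 : ∀ A ∈ Q, ∀ B ∈ Q, A ≠ B → Disjoint A B) (hQ3 : Q.sup id = Finset.univ)
    (hPm : ∀ A ∈ P, ∀ v ∈ A, F^[Fintype.card V] v ∈ A)
    (hPe : ∀ A ∈ P, ∀ v ∈ A, ∀ w ∈ A, F^[Fintype.card V] v = F^[Fintype.card V] w)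
    (hQm : ∀ A ∈ Q, ∀ v ∈ A, F^[Fintype.card V] v ∈ A)
    (hQe : ∀ A ∈ Q, ∀ v ∈ A, ∀ w ∈ A, F^[Fintype.card V] v = F^[Fintype.card V] w) :
    ∀ A ∈ P, A ∈ Q := by
  classical
  set φ := F^[Fintype.card V] with hφ
  have covQ : ∀ v : V, ∃ B ∈ Q, v ∈ B := by
    intro v
    have : v ∈ Q.sup id := hQ3 ▸ Finset.mem_univ v
    simpa using Finset.mem_sup.mp this
  have covP : ∀ v : V, ∃ B ∈ P, v ∈ B := by
    intro v
    have : v ∈ P.sup id := hP3 ▸ Finset.mem_univ v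
    simpa using Finset.mem_sup.mp this
  intro A hA
  obtain ⟨v, hv⟩ := hP1 A hA
  obtain ⟨B, hB, hvB⟩ := covQ v
  have : A = B := by
    ext w
    constructor
    · intro hw
      have he : φ w = φ v := hPe A hA w hw v hv
      obtain ⟨B', hB', hwB'⟩ := covQ w
      have h1 : φ w ∈ B' := hQm B' hB' w hwB'
      have h2 : φ v ∈ B := hQm B hB v hvB
      have : B' = B := by
        by_contra hne
        exact Finset.disjoint_left.mp (hQ2 _ hB' _ hB hne) h1 (he ▸ h2)
      exact this ▸ hwB'
    · intro hw
      have he : φ w = φ v := hQe B hB w hw v hvB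
      obtain ⟨A', hA', hwA'⟩ := covP w
      have h1 : φ w ∈ A' := hPm A' hA' w hwA'
      have h2 : φ v ∈ A := hPm A hA v hv
      have : A' = A := by
        by_contra hne
        exact Finset.disjoint_left.mp (hP2 _ hA' _ hA hne) h1 (he ▸ h2)
      exact this ▸ hwA'
  exact this ▸ hB

private lemma edgeless_unique {V : Type*} [Fintype V] [DecidableEq V]
    (K : SimpleGraph V) (hE : ∀ u v, ¬K.Adj u v) (P : Finset (Finset V))
    (h1 : ∀ A ∈ P, A.Nonempty ∧ (K.induce (A : Set V)).Connected)
    (h3 : P.sup id = Finset.univ) :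
    P = Finset.univ.image (fun v => ({v} : Finset V)) := by
  classical
  have hsing : ∀ A ∈ P, ∀ v ∈ A, A = {v} := by
    intro A hA v hv
    have hconn := (h1 A hA).2
    rw [Finset.eq_singleton_iff_unique_mem]
    refine ⟨hv, fun w hw => ?_⟩
    have hr : (K.induce (A : Set V)).Reachable ⟨w, by simpa using hw⟩ ⟨v, by simpa using hv⟩ :=
      hconn.preconnected _ _
    obtain ⟨p⟩ := hr
    cases p with
    | nil => rfl
    | cons h q => exact absurd h (hE _ _)
  ext A
  simp only [Finset.mem_image, Finset.mem_univ, true_and]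
  constructor
  · intro hA
    obtain ⟨v, hv⟩ := (h1 A hA).1
    exact ⟨v, (hsing A hA v hv).symm⟩
  · rintro ⟨v, rfl⟩
    have : v ∈ P.sup id := h3 ▸ Finset.mem_univ v
    obtain ⟨A, hA, hvA⟩ := by simpa using Finset.mem_sup.mp this
    have := hsing A hA v hvA
    exact this ▸ hA



/-- For `c ∈ (0,1)` and a (multi-)graph `K` with maximum degree at most `|V(K)|^c / 10`,
the number of partitions of `V(K)` into parts inducing connected subgraphs is at most
`|V(K)|^(c·|V(K)|)`. -/
theorem stmt_1 {V : Type*} [Fintype V] [DecidableEq V]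
    (K : SimpleGraph V) [DecidableRel K.Adj]
    (c : ℝ) (hc : c ∈ Set.Ioo (0:ℝ) 1)
    (hΔ : ∀ v : V, (K.degree v : ℝ) ≤ (Fintype.card V : ℝ) ^ c / 10) :
    (Nat.card {P : Finset (Finset V) //
        (∀ A ∈ P, A.Nonempty ∧ (K.induce (A : Set V)).Connected) ∧
        (∀ A ∈ P, ∀ B ∈ P, A ≠ B → Disjoint A B) ∧
        P.sup id = Finset.univ} : ℝ)
      ≤ (Fintype.card V : ℝ) ^ (c * Fintype.card V) := by
  classical
  set n := Fintype.card V with hn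
  set T := {P : Finset (Finset V) //
        (∀ A ∈ P, A.Nonempty ∧ (K.induce (A : Set V)).Connected) ∧
        (∀ A ∈ P, ∀ B ∈ P, A ≠ B → Disjoint A B) ∧
        P.sup id = Finset.univ} with hT
  by_cases hE : ∃ u v, K.Adj u v
  · -- the graph has an edge
    obtain ⟨u, w, huw⟩ := hE
    have hn1 : 1 ≤ n := by
      have : 0 < Fintype.card V := Fintype.card_pos_iff.mpr ⟨u⟩
      omega
    have h10 : (10 : ℝ) ≤ (n : ℝ) ^ c := by
      have hdeg : 1 ≤ K.degree u := by
        rw [Nat.one_le_iff_ne_zero, ← Nat.pos_iff_ne_zero, K.degree_pos_iff_exists_adj]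
        exact ⟨w, huw⟩
      have := hΔ u
      have h1 : (1 : ℝ) ≤ (K.degree u : ℝ) := by exact_mod_cast hdeg
      nlinarith
    -- injection into parent functions
    have hinj : ∃ Φ : T → (∀ v : V, {w : V // w = v ∨ K.Adj v w}), Function.Injective Φ := by
      have hex : ∀ P : T, ∃ F : V → V, (∀ v, F v = v ∨ K.Adj v (F v)) ∧
          (∀ A ∈ P.1, ∀ v ∈ A, F^[n] v ∈ A) ∧
          (∀ A ∈ P.1, ∀ v ∈ A, ∀ w ∈ A, F^[n] v = F^[n] w) :=
        fun P => exists_encode K P.1 P.2.1 P.2.2.1 P.2.2.2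
      choose F hF1 hF2 hF3 using hex
      refine ⟨fun P v => ⟨F P v, hF1 P v⟩, ?_⟩
      · intro P Q hPQ
        have hFeq : F P = F Q := by
          funext v
          exact congrArg Subtype.val (congrFun hPQ v)
        apply Subtype.ext
        apply Finset.Subset.antisymm
        · intro A hA
          exact encode_mem K P.1 Q.1 (F P) (fun A hA => (P.2.1 A hA).1) P.2.2.1 P.2.2.2
            Q.2.2.1 Q.2.2.2 (hF2 P) (hF3 P) (hFeq ▸ hF2 Q) (hFeq ▸ hF3 Q) A hA
        · intro A hA
          exact encode_mem K Q.1 P.1 (F Q) (fun A hA => (Q.2.1 A hA).1) Q.2.2.1 Q.2.2.2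
            P.2.2.1 P.2.2.2 (hF2 Q) (hF3 Q) (hFeq ▸ hF2 P) (hFeq ▸ hF3 P) A hA
    obtain ⟨Φ, hΦ⟩ := hinj
    have hcard1 : Nat.card T ≤ Nat.card (∀ v : V, {w : V // w = v ∨ K.Adj v w}) :=
      Nat.card_le_card_of_injective Φ hΦ
    have hcard2 : Nat.card (∀ v : V, {w : V // w = v ∨ K.Adj v w})
        = ∏ v : V, Nat.card {w : V // w = v ∨ K.Adj v w} := Nat.card_pi
    have hcard3 : ∀ v : V, Nat.card {w : V // w = v ∨ K.Adj v w} ≤ K.degree v + 1 := by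
      intro v
      rw [Nat.card_eq_fintype_card, Fintype.card_subtype]
      have hsub : Finset.univ.filter (fun w => w = v ∨ K.Adj v w)
          ⊆ insert v (K.neighborFinset v) := by
        intro w hw
        simp only [Finset.mem_filter] at hw
        rcases hw.2 with h | h
        · simp [h]
        · simp [SimpleGraph.mem_neighborFinset, h]
      calc (Finset.univ.filter (fun w => w = v ∨ K.Adj v w)).card
          ≤ (insert v (K.neighborFinset v)).card := Finset.card_le_card hsub
        _ ≤ (K.neighborFinset v).card + 1 := Finset.card_insert_le _ _
        _ = K.degree v + 1 := by rw [K.card_neighborFinset_eq_degree]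
    -- real bounds
    have hR1 : (Nat.card T : ℝ) ≤ ∏ v : V, ((K.degree v : ℝ) + 1) := by
      calc (Nat.card T : ℝ) ≤ ((∏ v : V, (K.degree v + 1) : ℕ) : ℝ) := by
            exact_mod_cast hcard1.trans (hcard2 ▸ Finset.prod_le_prod' (fun v _ => hcard3 v))
        _ = ∏ v : V, ((K.degree v : ℝ) + 1) := by push_cast; exact Finset.prod_congr rfl fun _ _ => by ring
    have hR2 : ∀ v : V, (K.degree v : ℝ) + 1 ≤ (n : ℝ) ^ c := by
      intro v
      have := hΔ v
      nlinarith
    have hR3 : ∏ v : V, ((K.degree v : ℝ) + 1) ≤ ∏ _v : V, (n : ℝ) ^ c :=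
      Finset.prod_le_prod (fun v _ => by positivity) (fun v _ => hR2 v)
    have hR4 : ∏ _v : V, (n : ℝ) ^ c = (n : ℝ) ^ (c * n) := by
      rw [Finset.prod_const, Finset.card_univ, ← hn, ← Real.rpow_natCast ((n:ℝ)^c) n,
        ← Real.rpow_mul (by positivity)]
    rw [hR4] at hR3
    linarith
  · -- edgeless
    push_neg at hE
    have hsub : Subsingleton T := by
      constructor
      rintro ⟨P, hP1, _, hP3⟩ ⟨Q, hQ1, _, hQ3⟩
      exact Subtype.ext ((edgeless_unique K hE P hP1 hP3).trans
        (edgeless_unique K hE Q hQ1 hQ3).symm)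
    have hle1 : Nat.card T ≤ 1 := by
      rcases isEmpty_or_nonempty T with h | h
      · simp [Nat.card_of_isEmpty]
      · haveI := hsub
        exact le_of_eq Nat.card_unique
    have h1R : (1 : ℝ) ≤ (n : ℝ) ^ (c * n) := by
      rcases Nat.eq_zero_or_pos n with h0 | hpos
      · rw [h0]; simp
      · have : (1:ℝ) ≤ (n:ℝ) := by exact_mod_cast hpos
        calc (1:ℝ) = 1 ^ (c * n) := (Real.one_rpow _).symm
          _ ≤ (n:ℝ) ^ (c * n) := Real.rpow_le_rpow (by norm_num) this
              (mul_nonneg hc.1.le (Nat.cast_nonneg n))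
    calc (Nat.card T : ℝ) ≤ 1 := by exact_mod_cast hle1
      _ ≤ _ := h1R
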